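/- For every positive integer n, the sum over j from 0 to n of C(n,j)·(-1)^(n-j)/(2j+1) equals (-4)^n·(n!)²/(2n+1)!. -/

import Mathlib

open Finset

lemma aux_pf (n : ℕ) : ∀ x : ℚ, (∀ k ∈ Finset.range (n + 1), x + (k : ℚ) ≠ 0) →
    ∑ j ∈ Finset.range (n + 1), (n.choose j : ℚ) * (-1) ^ j / (x + j)
      = (n.factorial : ℚ) / ∏ k ∈ Finset.range (n + 1), (x + (k : ℚ)) := by
  induction n with
  | zero => intro x hx; simp
  | succ n ih =>
    intro x hx
    have hx0 : x ≠ 0 := by simpa using hx 0 (by simp)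
    have hx1 : ∀ k ∈ Finset.range (n + 1), (x + 1) + (k : ℚ) ≠ 0 := by
      intro k hk
      have := hx (k + 1) (by simp at hk ⊢; omega)
      push_cast at this
      intro h; apply this; linarith
    have hx' : ∀ k ∈ Finset.range (n + 1), x + (k : ℚ) ≠ 0 := by
      intro k hk
      exact hx k (by simp at hk ⊢; omega)
    have h1 := ih x hx'
    have h2 := ih (x + 1) hx1
    have split : ∑ j ∈ Finset.range (n + 2), ((n+1).choose j : ℚ) * (-1) ^ j / (x + j)
        = (∑ j ∈ Finset.range (n + 1), (n.choose j : ℚ) * (-1) ^ j / (x + j))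
          + ∑ j ∈ Finset.range (n + 1), (n.choose j : ℚ) * (-1) ^ (j+1) / (x + (j+1 : ℕ)) := by
      rw [Finset.sum_range_succ' (fun j => ((n+1).choose j : ℚ) * (-1) ^ j / (x + j))]
      have e1 : ∀ j ∈ Finset.range (n+1),
          ((n+1).choose (j+1) : ℚ) * (-1) ^ (j+1) / (x + (j+1 : ℕ))
          = (n.choose j : ℚ) * (-1) ^ (j+1) / (x + (j+1 : ℕ))
            + (n.choose (j+1) : ℚ) * (-1) ^ (j+1) / (x + (j+1 : ℕ)) := by
        intro j hj
        rw [Nat.choose_succ_succ]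
        push_cast
        ring
      rw [Finset.sum_congr rfl e1, Finset.sum_add_distrib]
      have e2 : (∑ j ∈ Finset.range (n+1),
          (n.choose (j+1) : ℚ) * (-1) ^ (j+1) / (x + ((j+1:ℕ) : ℚ)))
          + (n.choose 0 : ℚ) * (-1) ^ 0 / (x + ((0:ℕ) : ℚ))
          = ∑ j ∈ Finset.range (n + 1), (n.choose j : ℚ) * (-1) ^ j / (x + j) := by
        rw [← Finset.sum_range_succ' (fun j => (n.choose j : ℚ) * (-1) ^ j / (x + j))]
        rw [Finset.sum_range_succ]
        simp
      have e3 : ((n+1).choose 0 : ℚ) = (n.choose 0 : ℚ) := by simp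
      rw [e3]
      linarith [e2]
    have shift : ∑ j ∈ Finset.range (n + 1), (n.choose j : ℚ) * (-1) ^ (j+1) / (x + (j+1 : ℕ))
        = - ((n.factorial : ℚ) / ∏ k ∈ Finset.range (n + 1), ((x+1) + (k : ℚ))) := by
      rw [← h2, ← Finset.sum_neg_distrib]
      apply Finset.sum_congr rfl
      intro j hj
      push_cast
      ring_nf
    rw [split, h1, shift]
    set P := ∏ k ∈ Finset.range (n + 1), (x + (k : ℚ)) with hPdef
    set Q := ∏ k ∈ Finset.range (n + 1), ((x+1) + (k : ℚ)) with hQdef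
    set R := ∏ k ∈ Finset.range (n + 2), (x + (k : ℚ)) with hRdef
    have key : R = P * (x + ((n+1 : ℕ) : ℚ)) := Finset.prod_range_succ _ _
    have hprod2 : Q = ∏ k ∈ Finset.range (n + 1), (x + ((k+1 : ℕ) : ℚ)) := by
      apply Finset.prod_congr rfl; intro k hk; push_cast; ring
    have hxQ : x * Q = R := by
      rw [hprod2, hRdef, Finset.prod_range_succ' (fun k : ℕ => (x + (k : ℚ))) (n+1)]
      push_cast
      ring
    have hP1 : P ≠ 0 := Finset.prod_ne_zero_iff.mpr hx'
    have hR : R ≠ 0 := Finset.prod_ne_zero_iff.mpr hx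
    have hQ : Q ≠ 0 := fun h => hR (by rw [← hxQ, h, mul_zero])
    rw [← sub_eq_add_neg, div_sub_div _ _ hP1 hQ, div_eq_div_iff (mul_ne_zero hP1 hQ) hR,
      key]
    push_cast [Nat.factorial_succ]
    push_cast at key
    linear_combination (n.factorial : ℚ) * P * hxQ + (n.factorial : ℚ) * P * key

lemma oddprod (n : ℕ) :
    (∏ k ∈ Finset.range (n + 1), ((1:ℚ)/2 + k)) * (2 ^ (2*n+1) * n.factorial)
      = ((2*n+1).factorial : ℚ) := by
  induction n with
  | zero => simp
  | succ n ih =>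
    rw [Finset.prod_range_succ]
    have hfac : (2*(n+1)+1).factorial = (2*n+3) * ((2*n+2) * (2*n+1).factorial) := by
      rw [show 2*(n+1)+1 = (2*n+1)+1+1 by ring, Nat.factorial_succ, Nat.factorial_succ]
    have hf1 : (((n+1)).factorial : ℚ) = ((n:ℚ)+1) * n.factorial := by
      push_cast [Nat.factorial_succ]; ring
    rw [hfac, hf1]
    push_cast
    linear_combination ((2*(n:ℚ)+3)*(2*(n:ℚ)+2)) * ih

theorem stmt_0 (n : ℕ) (hn : 0 < n) :
    ∑ j ∈ Finset.range (n + 1), (n.choose j : ℚ) * (-1) ^ (n - j) / (2 * j + 1)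
      = (-4) ^ n * (n.factorial : ℚ) ^ 2 / ((2 * n + 1).factorial : ℚ) := by
  have hhalf : ∀ k ∈ Finset.range (n + 1), (1/2 : ℚ) + (k : ℚ) ≠ 0 := by
    intro k hk; positivity
  have A := aux_pf n (1/2) hhalf
  have hterm : ∀ j ∈ Finset.range (n + 1),
      (n.choose j : ℚ) * (-1) ^ (n - j) / (2 * j + 1)
      = (-1)^n * (1/2) * ((n.choose j : ℚ) * (-1) ^ j / ((1/2 : ℚ) + j)) := by
    intro j hj
    have hj' : j ≤ n := by simp at hj; omega
    have hsgn : ((-1:ℚ))^(n-j) * (-1)^j = (-1)^n := by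
      rw [← pow_add]; congr 1; omega
    have hsq : ((-1:ℚ))^j * (-1)^j = 1 := by
      rw [← pow_add, ← two_mul, pow_mul]; norm_num
    have hs : ((-1:ℚ))^(n-j) = (-1)^n * (-1)^j := by
      linear_combination ((-1:ℚ))^j * hsgn - ((-1:ℚ))^(n-j) * hsq
    have h2j : (2*(j:ℚ)+1) ≠ 0 := by positivity
    have hhj : ((1/2:ℚ) + j) ≠ 0 := by positivity
    rw [hs]
    field_simp
    try ring
  have e := Finset.sum_congr rfl hterm
  rw [e, ← Finset.mul_sum, A]
  have hPr : (∏ k ∈ Finset.range (n + 1), ((1:ℚ)/2 + k)) ≠ 0 :=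
    Finset.prod_ne_zero_iff.mpr hhalf
  have hF : (((2*n+1).factorial : ℚ)) ≠ 0 :=
    Nat.cast_ne_zero.mpr (Nat.factorial_ne_zero _)
  have h4 : ((-4:ℚ))^n = (-1)^n * 2^(2*n) := by
    rw [show ((-4:ℚ)) = (-1) * 2^2 by norm_num, mul_pow, ← pow_mul]
  have h2 : ((2:ℚ))^(2*n+1) = 2 * 2^(2*n) := by rw [pow_succ]; ring
  have ho := oddprod n
  rw [h2] at ho
  rw [h4]
  set Pr := ∏ k ∈ Finset.range (n + 1), ((1:ℚ)/2 + k) with hPrdef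
  field_simp
  linear_combination (-1 : ℚ) * ho
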